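/- Let d ≥ 1 and j ≥ 0 be integers. Then, as an identity of formal power series in the variables x_1, …, x_d, y over ℤ, ∑_{a_1,…,a_d ≥ 0} ∑_{k=0}^{a_1+⋯+a_d+j} x_1^{a_1} ⋯ x_d^{a_d} y^k = (1/(1−y)) · [ ∏_{i=1}^d 1/(1−x_i) − y^{j+1} ∏_{i=1}^d 1/(1−x_i y) ]. -/

import Mathlib

open Finset

/-- The result of applying MacMahon's Omega operator `Ω≥` to
`λ^j / ((1-λx_1)⋯(1-λx_d)(1-λ⁻¹y))`: the multivariate formal power series in
`x_1, …, x_d` (variables `Sum.inl i`) and `y` (variable `Sum.inr ()`) whose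
coefficient of `x_1^{a_1} ⋯ x_d^{a_d} y^k` is `1` if `k ≤ a_1 + ⋯ + a_d + j`
and `0` otherwise. -/
noncomputable def omegaLHS (d j : ℕ) : MvPowerSeries (Fin d ⊕ Unit) ℤ :=
  fun e => if e (Sum.inr ()) ≤ (∑ i, e (Sum.inl i)) + j then 1 else 0

namespace MacMahonAux

open MvPowerSeries

/-- Auxiliary: series with coefficient 1 iff y-exponent is 0 and x-exponents in `s` are 0. -/
noncomputable def Gs (d : ℕ) (s : Finset (Fin d)) : MvPowerSeries (Fin d ⊕ Unit) ℤ :=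
  fun e => if e (Sum.inr ()) = 0 ∧ ∀ i ∈ s, e (Sum.inl i) = 0 then 1 else 0

/-- Auxiliary: series with coefficient 1 iff y-exponent equals sum of x-exponents
outside `s`, and x-exponents in `s` are 0. -/
noncomputable def Hs (d : ℕ) (s : Finset (Fin d)) : MvPowerSeries (Fin d ⊕ Unit) ℤ :=
  fun e => if e (Sum.inr ()) = (∑ i ∈ sᶜ, e (Sum.inl i)) ∧ ∀ i ∈ s, e (Sum.inl i) = 0
    then 1 else 0

lemma coeff_mul_one_sub_monomial {σ : Type*} (f : MvPowerSeries σ ℤ) (m e : σ →₀ ℕ) :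
    MvPowerSeries.coeff e (f * (1 - MvPowerSeries.monomial m (1 : ℤ))) =
      MvPowerSeries.coeff e f -
        if m ≤ e then MvPowerSeries.coeff (e - m) f else 0 := by
  rw [mul_sub, mul_one, map_sub, MvPowerSeries.coeff_mul_monomial]
  split_ifs <;> simp

lemma G_step {d : ℕ} (s : Finset (Fin d)) (i : Fin d) (hi : i ∉ s) :
    Gs d s * (1 - MvPowerSeries.X (Sum.inl i)) = Gs d (insert i s) := by
  ext e
  rw [MvPowerSeries.X, coeff_mul_one_sub_monomial]
  simp only [MvPowerSeries.coeff_apply, Gs]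
  have hle : Finsupp.single (Sum.inl i : Fin d ⊕ Unit) 1 ≤ e ↔ 1 ≤ e (Sum.inl i) :=
    Finsupp.single_le_iff
  have hinr : ((e - Finsupp.single (Sum.inl i) 1 : (Fin d ⊕ Unit) →₀ ℕ)) (Sum.inr ()) = e (Sum.inr ()) := by
    rw [Finsupp.tsub_apply, Finsupp.single_eq_of_ne (by simp)]; simp
  have hinl : ∀ k ∈ s, ((e - Finsupp.single (Sum.inl i) 1 : (Fin d ⊕ Unit) →₀ ℕ)) (Sum.inl k)
      = e (Sum.inl k) := by
    intro k hk
    rw [Finsupp.tsub_apply, Finsupp.single_eq_of_ne (by simp; rintro rfl; exact hi hk)]; simp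
  have hP : (((e - Finsupp.single (Sum.inl i) 1 : (Fin d ⊕ Unit) →₀ ℕ)) (Sum.inr ()) = 0 ∧
      ∀ k ∈ s, ((e - Finsupp.single (Sum.inl i) 1 : (Fin d ⊕ Unit) →₀ ℕ)) (Sum.inl k) = 0) ↔
      (e (Sum.inr ()) = 0 ∧ ∀ k ∈ s, e (Sum.inl k) = 0) := by
    rw [hinr]
    exact and_congr Iff.rfl ⟨fun h k hk => (hinl k hk).symm.trans (h k hk),
      fun h k hk => (hinl k hk).trans (h k hk)⟩
  simp only [hle, hP, Finset.forall_mem_insert]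
  by_cases hQ : e (Sum.inr ()) = 0 ∧ ∀ k ∈ s, e (Sum.inl k) = 0
  · by_cases hb : e (Sum.inl i) = 0
    · simp [hQ.1, hQ.2, hb]
    · simp [hQ.1, hQ.2, hb, Nat.one_le_iff_ne_zero]
  · have h2 : ¬(e (Sum.inr ()) = 0 ∧ e (Sum.inl i) = 0 ∧ ∀ k ∈ s, e (Sum.inl k) = 0) := by
      tauto
    simp only [hQ, h2, if_false]
    split_ifs <;> simp

lemma H_step {d : ℕ} (s : Finset (Fin d)) (i : Fin d) (hi : i ∉ s) :
    Hs d s * (1 - MvPowerSeries.X (Sum.inl i) * MvPowerSeries.X (Sum.inr ())) =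
      Hs d (insert i s) := by
  ext e
  rw [show (MvPowerSeries.X (Sum.inl i) * MvPowerSeries.X (Sum.inr ()) :
      MvPowerSeries (Fin d ⊕ Unit) ℤ) =
      MvPowerSeries.monomial
        (Finsupp.single (Sum.inl i) 1 + Finsupp.single (Sum.inr ()) 1) (1 : ℤ) from by
    rw [MvPowerSeries.X, MvPowerSeries.X, MvPowerSeries.monomial_mul_monomial, one_mul]]
  rw [coeff_mul_one_sub_monomial]
  simp only [MvPowerSeries.coeff_apply, Hs]
  set m : (Fin d ⊕ Unit) →₀ ℕ :=
    Finsupp.single (Sum.inl i) 1 + Finsupp.single (Sum.inr ()) 1 with hm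
  have hmr : m (Sum.inr ()) = 1 := by
    simp [hm, Finsupp.single_apply]
  have hml : ∀ k : Fin d, m (Sum.inl k) = if k = i then 1 else 0 := by
    intro k
    rw [hm, Finsupp.add_apply,
      Finsupp.single_eq_of_ne (show (Sum.inl k : Fin d ⊕ Unit) ≠ Sum.inr () by simp), add_zero,
      Finsupp.single_apply]
    simp only [Sum.inl.injEq]
    split_ifs with h1 h2 h2 <;> first | rfl | (exact absurd h1.symm h2) | (exact absurd h2.symm h1)
  have hle : m ≤ e ↔ 1 ≤ e (Sum.inl i) ∧ 1 ≤ e (Sum.inr ()) := by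
    rw [Finsupp.le_def]
    constructor
    · intro h
      refine ⟨?_, ?_⟩
      · have := h (Sum.inl i); rwa [hml, if_pos rfl] at this
      · have := h (Sum.inr ()); rwa [hmr] at this
    · rintro ⟨h1, h2⟩ a
      rcases a with k | ⟨⟩
      · rw [hml]; split_ifs with h
        · subst h; exact h1
        · exact Nat.zero_le _
      · rw [hmr]; exact h2
  have hinr : (e - m) (Sum.inr ()) = e (Sum.inr ()) - 1 := by
    rw [Finsupp.tsub_apply, hmr]
  have hinl : ∀ k : Fin d, (e - m) (Sum.inl k) = e (Sum.inl k) - (if k = i then 1 else 0) := by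
    intro k; rw [Finsupp.tsub_apply, hml]
  have hic : i ∈ sᶜ := Finset.mem_compl.2 hi
  set T : ℕ := ∑ k ∈ sᶜ.erase i, e (Sum.inl k) with hT
  have hS : ∑ k ∈ sᶜ, e (Sum.inl k) = e (Sum.inl i) + T :=
    (Finset.add_sum_erase _ _ hic).symm
  have hS' : ∑ k ∈ sᶜ, (e - m) (Sum.inl k) = (e (Sum.inl i) - 1) + T := by
    rw [← Finset.add_sum_erase _ _ hic, hinl, if_pos rfl]
    congr 1
    refine Finset.sum_congr rfl fun k hk => ?_
    rw [hinl, if_neg (Finset.ne_of_mem_erase hk), Nat.sub_zero]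
  have hQiff : ∀ k ∈ s, ((e - m) (Sum.inl k) = 0 ↔ e (Sum.inl k) = 0) := by
    intro k hk
    rw [hinl, if_neg (fun hc : k = i => hi (hc ▸ hk)), Nat.sub_zero]
  have hP : ((e - m) (Sum.inr ()) = (∑ k ∈ sᶜ, (e - m) (Sum.inl k)) ∧
      ∀ k ∈ s, (e - m) (Sum.inl k) = 0) ↔
      (e (Sum.inr ()) - 1 = (e (Sum.inl i) - 1) + T ∧ ∀ k ∈ s, e (Sum.inl k) = 0) := by
    rw [hinr, hS']
    exact and_congr Iff.rfl (forall₂_congr hQiff)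
  have hR : (e (Sum.inr ()) = (∑ k ∈ (insert i s)ᶜ, e (Sum.inl k)) ∧
      ∀ k ∈ insert i s, e (Sum.inl k) = 0) ↔
      (e (Sum.inr ()) = T ∧ (e (Sum.inl i) = 0 ∧ ∀ k ∈ s, e (Sum.inl k) = 0)) := by
    rw [Finset.compl_insert, Finset.forall_mem_insert, ← hT]
  simp only [hle, hP, hR, hS]
  by_cases hQ : ∀ k ∈ s, e (Sum.inl k) = 0
  · simp only [eq_true hQ, and_true]
    split_ifs <;> omega
  · have c1 : ¬(e (Sum.inr ()) = e (Sum.inl i) + T ∧ ∀ k ∈ s, e (Sum.inl k) = 0) :=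
      fun h => hQ h.2
    have c2 : ¬(e (Sum.inr ()) - 1 = e (Sum.inl i) - 1 + T ∧ ∀ k ∈ s, e (Sum.inl k) = 0) :=
      fun h => hQ h.2
    have c3 : ¬(e (Sum.inr ()) = T ∧ e (Sum.inl i) = 0 ∧ ∀ k ∈ s, e (Sum.inl k) = 0) :=
      fun h => hQ h.2.2
    simp only [c1, c2, c3, if_false]
    split_ifs <;> simp

lemma F_step (d j : ℕ) :
    omegaLHS d j * (1 - MvPowerSeries.X (Sum.inr ())) =
      Gs d ∅ - MvPowerSeries.X (Sum.inr ()) ^ (j + 1) * Hs d ∅ := by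
  ext e
  rw [MvPowerSeries.X_pow_eq, MvPowerSeries.X, coeff_mul_one_sub_monomial, map_sub,
    MvPowerSeries.coeff_monomial_mul]
  simp only [MvPowerSeries.coeff_apply, omegaLHS, Gs, Hs, one_mul, Finset.compl_empty,
    Finset.notMem_empty, false_implies, implies_true, and_true]
  have key : ∀ c : ℕ, ∀ k : Fin d,
      ((e - Finsupp.single (Sum.inr () : Fin d ⊕ Unit) c) : (Fin d ⊕ Unit) →₀ ℕ) (Sum.inl k)
        = e (Sum.inl k) := by
    intro c k
    rw [Finsupp.tsub_apply, Finsupp.single_eq_of_ne (by simp), Nat.sub_zero]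
  have keyr : ∀ c : ℕ,
      ((e - Finsupp.single (Sum.inr () : Fin d ⊕ Unit) c) : (Fin d ⊕ Unit) →₀ ℕ) (Sum.inr ())
        = e (Sum.inr ()) - c := by
    intro c
    rw [Finsupp.tsub_apply, Finsupp.single_eq_same]
  have hsum : ∀ c : ℕ,
      (∑ k : Fin d, ((e - Finsupp.single (Sum.inr () : Fin d ⊕ Unit) c) :
        (Fin d ⊕ Unit) →₀ ℕ) (Sum.inl k)) = ∑ k : Fin d, e (Sum.inl k) :=
    fun c => Finset.sum_congr rfl fun k _ => key c k
  have hle : ∀ c : ℕ, (Finsupp.single (Sum.inr () : Fin d ⊕ Unit) c ≤ e ↔ c ≤ e (Sum.inr ())) :=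
    fun c => Finsupp.single_le_iff
  simp only [hle, keyr, hsum, key]
  split_ifs <;> omega

lemma G_prod {d : ℕ} (s : Finset (Fin d)) :
    Gs d ∅ * ∏ i ∈ s, (1 - MvPowerSeries.X (Sum.inl i)) = Gs d s := by
  induction s using Finset.induction_on with
  | empty => simp
  | @insert i s hi ih =>
    rw [Finset.prod_insert hi, mul_left_comm, mul_comm (1 - MvPowerSeries.X (Sum.inl i)),
      ih, G_step s i hi]

lemma H_prod {d : ℕ} (s : Finset (Fin d)) :
    Hs d ∅ * ∏ i ∈ s, (1 - MvPowerSeries.X (Sum.inl i) * MvPowerSeries.X (Sum.inr ()))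
      = Hs d s := by
  induction s using Finset.induction_on with
  | empty => simp
  | @insert i s hi ih =>
    rw [Finset.prod_insert hi, mul_left_comm,
      mul_comm (1 - MvPowerSeries.X (Sum.inl i) * MvPowerSeries.X (Sum.inr ())),
      ih, H_step s i hi]

lemma zero_iff {d : ℕ} (e : (Fin d ⊕ Unit) →₀ ℕ) :
    (e (Sum.inr ()) = 0 ∧ ∀ i : Fin d, i ∈ (Finset.univ : Finset (Fin d)) → e (Sum.inl i) = 0)
      ↔ e = 0 := by
  constructor
  · rintro ⟨h1, h2⟩
    ext a
    rcases a with k | ⟨⟩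
    · exact h2 k (Finset.mem_univ k)
    · exact h1
  · rintro rfl; simp

lemma G_univ {d : ℕ} : Gs d Finset.univ = 1 := by
  ext e
  rw [MvPowerSeries.coeff_one, MvPowerSeries.coeff_apply, Gs]
  rw [if_congr (zero_iff e) rfl rfl]

lemma H_univ {d : ℕ} : Hs d Finset.univ = 1 := by
  ext e
  rw [MvPowerSeries.coeff_one, MvPowerSeries.coeff_apply, Hs]
  simp only [Finset.compl_univ, Finset.sum_empty]
  rw [if_congr (zero_iff e) rfl rfl]

end MacMahonAux

theorem macmahon_elimination (d : ℕ) (hd : 1 ≤ d) (j : ℕ) :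
    omegaLHS d j *
        ((1 - MvPowerSeries.X (Sum.inr ())) *
          ((∏ i : Fin d, (1 - MvPowerSeries.X (Sum.inl i))) *
            ∏ i : Fin d,
              (1 - MvPowerSeries.X (Sum.inl i) *
                MvPowerSeries.X (Sum.inr ()) : MvPowerSeries (Fin d ⊕ Unit) ℤ))) =
      (∏ i : Fin d,
          (1 - MvPowerSeries.X (Sum.inl i) * MvPowerSeries.X (Sum.inr ()))) -
        MvPowerSeries.X (Sum.inr ()) ^ (j + 1) *
          ∏ i : Fin d, (1 - MvPowerSeries.X (Sum.inl i)) := by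
  have hG : MacMahonAux.Gs d ∅ * ∏ i : Fin d, (1 - MvPowerSeries.X (Sum.inl i)) = 1 := by
    rw [MacMahonAux.G_prod, MacMahonAux.G_univ]
  have hH : MacMahonAux.Hs d ∅ *
      ∏ i : Fin d, (1 - MvPowerSeries.X (Sum.inl i) * MvPowerSeries.X (Sum.inr ())) = 1 := by
    rw [MacMahonAux.H_prod, MacMahonAux.H_univ]
  have hF := MacMahonAux.F_step d j
  linear_combination
    ((∏ i : Fin d, (1 - MvPowerSeries.X (Sum.inl i))) *
      ∏ i : Fin d, (1 - MvPowerSeries.X (Sum.inl i) * MvPowerSeries.X (Sum.inr ()))) * hF +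
    (∏ i : Fin d, (1 - MvPowerSeries.X (Sum.inl i) * MvPowerSeries.X (Sum.inr ()))) * hG -
    (MvPowerSeries.X (Sum.inr ()) ^ (j + 1) *
      ∏ i : Fin d, (1 - MvPowerSeries.X (Sum.inl i))) * hH
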